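/- For every natural number k ≥ 0, ∑_{i=0}^{2k+1} max(i, 2k+1 − i)·binom(2k+1, i)·(1/2)^{2k+1} = (2k+1)/2 + ((2k+1)/2)·binom(2k, k)·(1/2)^{2k}. -/

import Mathlib

open Finset

lemma halfsum (k : ℕ) :
    2 * ∑ j ∈ range (k+1), (2*k).choose (j+k) = 4^k + (2*k).choose k := by
  have hrefl : ∑ j ∈ range (k+1), (2*k).choose (j+k)
      = ∑ j ∈ range (k+1), (2*k).choose j := by
    rw [← Finset.sum_range_reflect (fun j => (2*k).choose (j+k)) (k+1)]
    apply Finset.sum_congr rfl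
    intro j hj
    simp only [Finset.mem_range] at hj
    have h1 : k + 1 - 1 - j + k = 2*k - j := by omega
    rw [h1, Nat.choose_symm (by omega)]
  have htot : ∑ j ∈ range (2*k+1), (2*k).choose j = 4^k := by
    rw [Nat.sum_range_choose]
    norm_num [pow_mul]
  have hsplit : ∑ j ∈ range (2*k+1), (2*k).choose j
      = ∑ j ∈ range k, (2*k).choose j + ∑ j ∈ range (k+1), (2*k).choose (j+k) := by
    have : 2*k+1 = k + (k+1) := by omega
    rw [this, Finset.sum_range_add]
    congr 1
    apply Finset.sum_congr rfl
    intro j _; congr 1; omega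
  have hstep : ∑ j ∈ range (k+1), (2*k).choose j
      = ∑ j ∈ range k, (2*k).choose j + (2*k).choose k := Finset.sum_range_succ _ k
  omega

lemma point (k m : ℕ) : ((2*k-m)+1) * (2*k+1).choose ((2*k-m)+1) = (2*k+1)*(2*k).choose (2*k-m) := by
  rw [mul_comm]
  exact (Nat.add_one_mul_choose_eq (2*k) (2*k-m)).symm

lemma keysum (k : ℕ) :
    ∑ i ∈ range (2*k+2), max i (2*k+1-i) * (2*k+1).choose i
      = (2*k+1) * (4^k + (2*k).choose k) := by
  have hsplit : (2*k+2) = (k+1) + (k+1) := by omega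
  rw [hsplit, Finset.sum_range_add]
  have h1 : ∑ i ∈ range (k+1), max i (2*k+1-i) * (2*k+1).choose i
      = (2*k+1) * ∑ i ∈ range (k+1), (2*k).choose (i+k) := by
    rw [Finset.mul_sum]
    calc ∑ i ∈ range (k+1), max i (2*k+1-i) * (2*k+1).choose i
        = ∑ i ∈ range (k+1), (2*k+1) * (2*k).choose (2*k-i) := by
          apply Finset.sum_congr rfl
          intro i hi
          simp only [Finset.mem_range] at hi
          have hmax : max i (2*k+1-i) = 2*k+1-i := by omega
          rw [hmax, ← Nat.choose_symm (by omega : i ≤ 2*k+1)]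
          have h2 : 2*k+1-i = (2*k-i)+1 := by omega
          rw [h2, point]
      _ = ∑ i ∈ range (k+1), (2*k+1) * (2*k).choose (i+k) := by
          rw [← Finset.sum_range_reflect (fun i => (2*k+1) * (2*k).choose (2*k-i)) (k+1)]
          apply Finset.sum_congr rfl
          intro i hi
          simp only [Finset.mem_range] at hi
          congr 2
          omega
  have h2 : ∀ j, j < k+1 → max (k+1+j) (2*k+1-(k+1+j)) * (2*k+1).choose (k+1+j)
      = (2*k+1) * (2*k).choose (j+k) := by
    intro j hj
    have hmax : max (k+1+j) (2*k+1-(k+1+j)) = k+1+j := by omega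
    rw [hmax]
    have h3 : k+1+j = (2*k-(k-j))+1 := by omega
    have h4 : j+k = 2*k-(k-j) := by omega
    rw [h3, h4, point]
  rw [h1, Finset.sum_congr rfl (fun j hj => h2 j (Finset.mem_range.mp hj)), ← Finset.mul_sum,
    ← Nat.two_mul, mul_left_comm, halfsum]

/-- Expected value of `max(i, 2k+1 − i)` for `i` binomial(2k+1, 1/2): the odd case. -/
theorem expected_max_binomial_odd (k : ℕ) :
    ∑ i ∈ Finset.range (2 * k + 2),
        ((max i (2 * k + 1 - i) : ℕ) : ℚ) * ((2 * k + 1).choose i : ℚ) * (1/2) ^ (2 * k + 1)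
      = (2 * (k : ℚ) + 1) / 2 + ((2 * (k : ℚ) + 1) / 2) * ((2 * k).choose k : ℚ) * (1/2) ^ (2 * k) := by
  rw [← Finset.sum_mul]
  have h : (∑ i ∈ range (2*k+2), ((max i (2*k+1-i) : ℕ) : ℚ) * ((2*k+1).choose i : ℚ))
      = (2*(k:ℚ)+1) * ((4:ℚ)^k + ((2*k).choose k : ℚ)) := by
    exact_mod_cast congrArg (fun n : ℕ => (n : ℚ)) (keysum k)
  rw [h]
  have h4 : (4:ℚ)^k = 2^(2*k) := by rw [pow_mul]; norm_num
  rw [h4]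
  field_simp
  have h5 : ((1:ℚ)/2)^(2*k) * 2^(2*k) = 1 := by rw [← mul_pow]; norm_num
  rw [pow_succ]
  linear_combination h5
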